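/- Let G^0, G^1, … be directed graphs on vertex set {1,…,n}, each containing a self-loop at every node, and let μ_0 = 0 and μ_{k+1} = μ_k + b_{k+1} for positive integers b_k such that the union of edges in each block [μ_k, μ_{k+1}−1] is strongly connected. Then for any l ≥ 0 and any node i, the set of nodes reachable from i via time-respecting paths using one edge from each of G^{μ_l}, G^{μ_l + 1}, …, G^{μ_{l+n}−1} is all of {1,…,n}. -/
import Mathlib

section Aux

variable {n : ℕ} (G : ℕ → Fin n → Fin n → Prop)

/-- Time-respecting reachability from `i` at time `a` to `j` at time `b`. -/
def TReach (a c : ℕ) (i j : Fin n) : Prop :=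
  ∃ f : ℕ → Fin n, f a = i ∧ f c = j ∧ ∀ t, a ≤ t → t < c → G t (f t) (f (t + 1))

lemma treach_wait (hself : ∀ k i, G k i i) (a c : ℕ) (i : Fin n) : TReach G a c i i :=
  ⟨fun _ => i, rfl, rfl, fun t _ _ => hself t i⟩

lemma treach_trans {a c d : ℕ} (hac : a ≤ c) (hcd : c ≤ d) {i j k : Fin n}
    (h1 : TReach G a c i j) (h2 : TReach G c d j k) : TReach G a d i k := by
  obtain ⟨f1, hf1a, hf1c, hf1⟩ := h1
  obtain ⟨f2, hf2c, hf2d, hf2⟩ := h2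
  refine ⟨fun t => if t < c then f1 t else f2 t, ?_, ?_, ?_⟩
  · by_cases h : a < c
    · simp [h, hf1a]
    · have hac' : a = c := le_antisymm hac (not_lt.1 h)
      simp only [h, if_false]
      rw [hac', hf2c, ← hf1c, ← hac', hf1a]
  · have h : ¬ d < c := not_lt.2 hcd
    simp [h, hf2d]
  · intro t hat htd
    by_cases ht1 : t + 1 < c
    · have ht : t < c := lt_of_le_of_lt (Nat.le_succ t) ht1
      simp only [ht, ht1, if_true]
      exact hf1 t hat ht
    · by_cases ht : t < c
      · have he : t + 1 = c := le_antisymm (Nat.succ_le_of_lt ht) (not_lt.1 ht1)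
        simp only [ht, ht1, if_true, if_false]
        have : f2 (t + 1) = f1 (t + 1) := by rw [he, hf2c, hf1c]
        rw [this]
        exact hf1 t hat ht
      · simp only [ht, ht1, if_false]
        exact hf2 t (not_lt.1 ht) htd

lemma treach_edge (hself : ∀ k i, G k i i) {a c t : ℕ} (hat : a ≤ t) (htc : t < c)
    {x y : Fin n} (h : G t x y) : TReach G a c x y := by
  refine ⟨fun s => if s ≤ t then x else y, by simp [hat], by simp [not_le.2 htc], ?_⟩
  intro s has hsc
  by_cases hs : s < t
  · simp only [le_of_lt hs, Nat.succ_le_of_lt hs, if_true]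
    exact hself s x
  · by_cases hst : s = t
    · subst hst
      simp only [le_refl, if_true, Nat.not_succ_le_self, if_false]
      exact h
    · have : ¬ s ≤ t := fun hle => hst (le_antisymm hle (not_lt.1 hs))
      simp only [this, if_false]
      have : ¬ s + 1 ≤ t := fun hle => this (le_trans (Nat.le_succ s) hle)
      simp only [this, if_false]
      exact hself s y

lemma cross {α : Type*} {r : α → α → Prop} {S : Set α} {a j : α}
    (h : Relation.ReflTransGen r a j) :
    a ∈ S → j ∉ S → ∃ x y, x ∈ S ∧ y ∉ S ∧ r x y := by
  induction h with
  | refl => intro ha hj; exact absurd ha hj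
  | @tail p q h1 h2 ih =>
    intro ha hq
    by_cases hp : p ∈ S
    · exact ⟨p, q, hp, hq, h2⟩
    · exact ih ha hp

end Aux

/-- Under block strong connectivity of the union graphs and self-loops at every node,
every node is reachable from every node via a time-respecting path over any window
of `n` consecutive blocks. -/
theorem stmt16 {n : ℕ} (hn : 0 < n) (G : ℕ → Fin n → Fin n → Prop)
    (hself : ∀ k i, G k i i)
    (b : ℕ → ℕ) (hb : ∀ k, 0 < b k)
    (μ : ℕ → ℕ) (hμ0 : μ 0 = 0) (hμ : ∀ k, μ (k + 1) = μ k + b (k + 1))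
    (hconn : ∀ k, ∀ i j : Fin n,
      Relation.ReflTransGen (fun a c => ∃ t, μ k ≤ t ∧ t < μ (k + 1) ∧ G t a c) i j) :
    ∀ l : ℕ, ∀ i j : Fin n, ∃ f : ℕ → Fin n, f (μ l) = i ∧ f (μ (l + n)) = j ∧
      ∀ t, μ l ≤ t → t < μ (l + n) → G t (f t) (f (t + 1)) := by
  have hmono : Monotone μ := by
    apply monotone_nat_of_le_succ
    intro k
    rw [hμ k]
    exact Nat.le_add_right _ _
  intro l i j
  classical
  set S : ℕ → Finset (Fin n) :=
    fun m => Finset.univ.filter (fun j => TReach G (μ l) (μ (l + m)) i j) with hS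
  have hmemS : ∀ m (j : Fin n), j ∈ S m ↔ TReach G (μ l) (μ (l + m)) i j := by
    intro m j; simp [hS]
  have hiS : ∀ m, i ∈ S m := fun m => (hmemS m i).2 (treach_wait G hself _ _ i)
  have hsub : ∀ m, S m ⊆ S (m + 1) := by
    intro m x hx
    rw [hmemS] at hx ⊢
    have : (l + (m + 1)) = (l + m) + 1 := by ring
    rw [this]
    exact treach_trans G (hmono (Nat.le_add_right l m)) (hmono (Nat.le_succ (l + m))) hx
      (treach_wait G hself _ _ x)
  have hgrow : ∀ m, S m ≠ Finset.univ → (S m).card < (S (m + 1)).card := by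
    intro m hne
    obtain ⟨j0, hj0⟩ : ∃ j0 : Fin n, j0 ∉ S m := by
      by_contra h
      push_neg at h
      exact hne (Finset.eq_univ_iff_forall.2 h)
    have hc := cross (S := {x : Fin n | x ∈ S m}) (hconn (l + m) i j0) (hiS m) hj0
    obtain ⟨x, y, hx, hy, t, hta, htc, hedge⟩ := hc
    have hyS : y ∈ S (m + 1) := by
      rw [hmemS]
      have : (l + (m + 1)) = (l + m) + 1 := by ring
      rw [this]
      exact treach_trans G (hmono (Nat.le_add_right l m)) (hmono (Nat.le_succ (l + m)))
        ((hmemS m x).1 hx) (treach_edge G hself hta htc hedge)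
    exact Finset.card_lt_card ⟨hsub m, fun hall => hy (hall hyS)⟩
  have hcard : ∀ m, S m = Finset.univ ∨ m + 1 ≤ (S m).card := by
    intro m
    induction m with
    | zero =>
      right
      exact Finset.card_pos.2 ⟨i, hiS 0⟩
    | succ m ih =>
      by_cases hm : S m = Finset.univ
      · left
        exact Finset.eq_univ_of_forall (fun x => hsub m (hm ▸ Finset.mem_univ x))
      · rcases ih with h | h
        · exact absurd h hm
        · right
          exact Nat.succ_le_of_lt (lt_of_le_of_lt h (hgrow m hm))
  have hfin : S n = Finset.univ := by
    rcases hcard n with h | h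
    · exact h
    · exfalso
      have : (S n).card ≤ n := le_trans (Finset.card_le_univ _) (by simp)
      omega
  have hj : j ∈ S n := hfin ▸ Finset.mem_univ j
  exact (hmemS n j).1 hj
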